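/- Let ε > 0, let x and y be independent random variables each distributed as Lap(1/ε), let f and F denote the density and cumulative distribution function of Lap(1/ε), and for real numbers α, β, γ define P(α, β, γ) = P[x < α ∧ y < β ∧ x + y < γ]. If γ < α + β, then P(α, β, γ) = F(α)·F(γ − α) + ∫_{γ−α}^{β} F(γ − y)·f(y) dy. -/

import Mathlib

open MeasureTheory ProbabilityTheory

/-- The Laplace distribution `Lap(b)` on `ℝ`, with density `(1/(2b))·e^{−|x|/b}`. -/
noncomputable def lapMeasure (b : ℝ) : Measure ℝ :=
  volume.withDensity fun x => ENNReal.ofReal ((1 / (2 * b)) * Real.exp (-|x| / b))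

/-- The density of the Laplace distribution `Lap(b)`. -/
noncomputable def lapPDF (b : ℝ) (x : ℝ) : ℝ := (1 / (2 * b)) * Real.exp (-|x| / b)

/-- The cumulative distribution function of the Laplace distribution `Lap(b)`. -/
noncomputable def lapCDF (b : ℝ) (x : ℝ) : ℝ :=
  if x ≤ 0 then (1 / 2) * Real.exp (x / b) else 1 - (1 / 2) * Real.exp (-x / b)


section helpers
open Set Filter Real

lemma exp_div_integrableOn_Iic {b : ℝ} (hb : 0 < b) (c : ℝ) :
    IntegrableOn (fun x => Real.exp (x / b)) (Iic c) := by
  refine integrableOn_Iic_of_intervalIntegral_norm_bounded (b * Real.exp (c / b)) c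
    (fun y => ((Real.continuous_exp.comp (continuous_id.div_const b)).integrableOn_Ioc)) tendsto_id
    ?_
  filter_upwards [Iic_mem_atBot c] with y (hy : y ≤ c)
  have h1 : ∫ x in y..c, ‖Real.exp (x / b)‖ = ∫ x in y..c, Real.exp (x / b) := by
    congr 1; ext x; exact Real.norm_of_nonneg (Real.exp_pos _).le
  rw [id_eq, h1, intervalIntegral.integral_comp_div (f := Real.exp) (ne_of_gt hb),
    integral_exp]
  rw [smul_eq_mul]
  have := (Real.exp_pos (y / b)).le
  nlinarith [Real.exp_pos (y / b), hb]

lemma integral_exp_div_Iic {b : ℝ} (hb : 0 < b) (c : ℝ) :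
    ∫ x in Iic c, Real.exp (x / b) = b * Real.exp (c / b) := by
  have hderiv : ∀ x ∈ Iic c, HasDerivAt (fun x => b * Real.exp (x / b))
      (Real.exp (x / b)) x := by
    intro x _
    have h1 : HasDerivAt (fun x : ℝ => x / b) (1 / b) x := by
      simpa using (hasDerivAt_id x).div_const b
    have := ((Real.hasDerivAt_exp (x / b)).comp x h1).const_mul b
    exact this.congr_deriv (by
      rw [mul_comm (Real.exp _), ← mul_assoc, mul_one_div_cancel hb.ne', one_mul])
  have htend : Tendsto (fun x => b * Real.exp (x / b)) atBot (nhds 0) := by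
    have h1 : Tendsto (fun x : ℝ => x / b) atBot atBot := tendsto_id.atBot_div_const hb
    have := (Real.tendsto_exp_atBot.comp h1).const_mul b
    simpa using this
  have := integral_Iic_of_hasDerivAt_of_tendsto' hderiv (exp_div_integrableOn_Iic hb c) htend
  simpa using this

lemma lapPDF_nonneg {b : ℝ} (hb : 0 < b) (x : ℝ) : 0 ≤ lapPDF b x := by
  unfold lapPDF; positivity

lemma lapPDF_integrableOn_Iic {b : ℝ} (hb : 0 < b) (c : ℝ) (hc : c ≤ 0) :
    IntegrableOn (lapPDF b) (Iic c) := by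
  have : EqOn (lapPDF b) (fun x => (1 / (2 * b)) * Real.exp (x / b)) (Iic c) := by
    intro x hx
    simp only [lapPDF, abs_of_nonpos (le_trans hx hc)]
    ring_nf
  exact (IntegrableOn.congr_fun (((exp_div_integrableOn_Iic hb c).const_mul _))
    (fun x hx => (this hx).symm) measurableSet_Iic)

lemma integral_lapPDF_Iic_nonpos {b : ℝ} (hb : 0 < b) (c : ℝ) (hc : c ≤ 0) :
    ∫ x in Iic c, lapPDF b x = (1 / 2) * Real.exp (c / b) := by
  have h1 : ∫ x in Iic c, lapPDF b x = ∫ x in Iic c, (1 / (2 * b)) * Real.exp (x / b) := by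
    refine setIntegral_congr_fun measurableSet_Iic (fun x hx => ?_)
    simp only [lapPDF, abs_of_nonpos (le_trans hx hc)]
    ring_nf
  rw [h1, integral_const_mul, integral_exp_div_Iic hb c]
  field_simp

lemma lapPDF_integrableOn_Ioc {b : ℝ} (hb : 0 < b) (c d : ℝ) :
    IntegrableOn (lapPDF b) (Ioc c d) := by
  apply Continuous.integrableOn_Ioc
  unfold lapPDF
  continuity

lemma intervalIntegral_lapPDF_pos {b : ℝ} (hb : 0 < b) (c : ℝ) (hc : 0 ≤ c) :
    ∫ x in (0:ℝ)..c, lapPDF b x = (1 / 2) - (1 / 2) * Real.exp (-c / b) := by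
  have h1 : ∫ x in (0:ℝ)..c, lapPDF b x
      = ∫ x in (0:ℝ)..c, (1 / (2 * b)) * Real.exp (x / (-b)) := by
    refine intervalIntegral.integral_congr (fun x hx => ?_)
    rw [uIcc_of_le hc] at hx
    simp only [lapPDF, abs_of_nonneg hx.1]
    rw [div_neg, neg_div]
  rw [h1, intervalIntegral.integral_const_mul,
    intervalIntegral.integral_comp_div (f := Real.exp) (c := -b) (by linarith), integral_exp]
  rw [smul_eq_mul]
  have hb' : b ≠ 0 := ne_of_gt hb
  rw [zero_div, div_neg, Real.exp_zero, neg_div]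
  field_simp
  ring

lemma integral_lapPDF_Iic {b : ℝ} (hb : 0 < b) (c : ℝ) :
    ∫ x in Iic c, lapPDF b x = lapCDF b c := by
  rcases le_or_gt c 0 with hc | hc
  · rw [integral_lapPDF_Iic_nonpos hb c hc, lapCDF, if_pos hc]
  · have hsplit : Iic c = Iic 0 ∪ Ioc 0 c := by
      rw [Iic_union_Ioc_eq_Iic hc.le]
    rw [hsplit, setIntegral_union (Iic_disjoint_Ioc le_rfl) measurableSet_Ioc
      (lapPDF_integrableOn_Iic hb 0 le_rfl) (lapPDF_integrableOn_Ioc hb 0 c),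
      integral_lapPDF_Iic_nonpos hb 0 le_rfl,
      ← intervalIntegral.integral_of_le hc.le, intervalIntegral_lapPDF_pos hb c hc.le]
    rw [lapCDF, if_neg (not_le.mpr hc)]
    simp
    ring

lemma lapPDF_integrable {b : ℝ} (hb : 0 < b) : Integrable (lapPDF b) := by
  rw [← integrableOn_univ, ← Iic_union_Ioi (a := (0:ℝ))]
  refine IntegrableOn.union (lapPDF_integrableOn_Iic hb 0 le_rfl) ?_
  have : EqOn (lapPDF b) (fun x => (1 / (2 * b)) * Real.exp (-b⁻¹ * x)) (Ioi 0) := by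
    intro x hx
    simp only [lapPDF, abs_of_nonneg (le_of_lt (show (0:ℝ) < x from hx))]
    rw [neg_div, div_eq_inv_mul]
    ring_nf
  exact IntegrableOn.congr_fun
    ((exp_neg_integrableOn_Ioi 0 (by positivity : (0:ℝ) < b⁻¹)).const_mul _)
    (fun x hx => (this hx).symm) measurableSet_Ioi


lemma lapPDF_measurable (b : ℝ) : Measurable (lapPDF b) := by
  unfold lapPDF
  exact (measurable_const.mul (((measurable_id.norm.neg).div_const b).exp))

lemma lapCDF_measurable (b : ℝ) : Measurable (lapCDF b) := by
  unfold lapCDF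
  exact Measurable.ite measurableSet_Iic
    (measurable_const.mul ((measurable_id.div_const b).exp))
    (measurable_const.sub (measurable_const.mul ((measurable_id.neg.div_const b).exp)))

lemma lapCDF_nonneg {b : ℝ} (hb : 0 < b) (c : ℝ) : 0 ≤ lapCDF b c := by
  unfold lapCDF
  split_ifs with h
  · positivity
  · push_neg at h
    have : Real.exp (-c / b) ≤ 1 := by
      rw [Real.exp_le_one_iff]
      rw [neg_div]
      have : 0 < c / b := by positivity
      linarith
    linarith

lemma lapCDF_le_one {b : ℝ} (hb : 0 < b) (c : ℝ) : lapCDF b c ≤ 1 := by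
  unfold lapCDF
  split_ifs with h
  · have : Real.exp (c / b) ≤ 1 := by
      rw [Real.exp_le_one_iff]
      exact div_nonpos_of_nonpos_of_nonneg h hb.le
    linarith
  · have := (Real.exp_pos (-c / b)).le
    linarith

lemma lapMeasure_Iio {b : ℝ} (hb : 0 < b) (c : ℝ) :
    lapMeasure b (Iio c) = ENNReal.ofReal (lapCDF b c) := by
  rw [lapMeasure, withDensity_apply _ measurableSet_Iio]
  have h1 : ∫⁻ x in Iio c, ENNReal.ofReal ((1 / (2 * b)) * Real.exp (-|x| / b))
      = ∫⁻ x in Iio c, ENNReal.ofReal (lapPDF b x) := rfl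
  rw [h1, ← ofReal_integral_eq_lintegral_ofReal
    ((lapPDF_integrable hb).integrableOn)
    (Filter.Eventually.of_forall (lapPDF_nonneg hb)),
    ← integral_Iic_eq_integral_Iio, integral_lapPDF_Iic hb]

lemma lapMeasure_isProbability {b : ℝ} (hb : 0 < b) :
    IsProbabilityMeasure (lapMeasure b) := by
  constructor
  rw [lapMeasure, withDensity_apply _ MeasurableSet.univ, Measure.restrict_univ]
  have h1 : ∫⁻ x, ENNReal.ofReal ((1 / (2 * b)) * Real.exp (-|x| / b))
      = ∫⁻ x, ENNReal.ofReal (lapPDF b x) := rfl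
  rw [h1, ← ofReal_integral_eq_lintegral_ofReal (lapPDF_integrable hb)
    (Filter.Eventually.of_forall (lapPDF_nonneg hb))]
  have hsplit : ∫ x, lapPDF b x = (∫ x in Iic 0, lapPDF b x) + ∫ x in Ioi 0, lapPDF b x := by
    rw [← setIntegral_union (Iic_disjoint_Ioi le_rfl) measurableSet_Ioi
      ((lapPDF_integrable hb).integrableOn) ((lapPDF_integrable hb).integrableOn),
      Iic_union_Ioi, setIntegral_univ]
  have heven : ∫ x in Ioi (0:ℝ), lapPDF b x = ∫ x in Iic 0, lapPDF b x := by
    have h2 := integral_comp_neg_Ioi 0 (lapPDF b)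
    rw [neg_zero] at h2
    rw [← h2]
    refine setIntegral_congr_fun measurableSet_Ioi (fun x _ => ?_)
    simp [lapPDF, abs_neg]
  rw [hsplit, heven, integral_lapPDF_Iic hb]
  norm_num [lapCDF]
end helpers

/-- For independent `x, y ∼ Lap(1/ε)` and
`P(α,β,γ) = P[x < α ∧ y < β ∧ x + y < γ]`, if `γ < α + β` then
`P(α, β, γ) = F(α)·F(γ − α) + ∫_{γ−α}^{β} F(γ − y)·f(y) dy`. -/
theorem laplace_prob_expansion
    (Ω : Type) [MeasurableSpace Ω] (μ : Measure Ω) [IsProbabilityMeasure μ]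
    (ε : ℝ) (hε : 0 < ε) (x y : Ω → ℝ) (hx : Measurable x) (hy : Measurable y)
    (hxd : μ.map x = lapMeasure (1 / ε)) (hyd : μ.map y = lapMeasure (1 / ε))
    (hind : IndepFun x y μ) (α β γ : ℝ) (hγ : γ < α + β) :
    (μ {ω | x ω < α ∧ y ω < β ∧ x ω + y ω < γ}).toReal =
      lapCDF (1 / ε) α * lapCDF (1 / ε) (γ - α) +
        ∫ z in (γ - α)..β, lapCDF (1 / ε) (γ - z) * lapPDF (1 / ε) z := by
  set b : ℝ := 1 / ε with hbdef
  have hb : 0 < b := by positivity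
  set ν : Measure ℝ := lapMeasure b with hνdef
  haveI hνP : IsProbabilityMeasure ν := lapMeasure_isProbability hb
  -- the joint law
  have hmap : μ.map (fun ω => (y ω, x ω)) = ν.prod ν := by
    rw [(indepFun_iff_map_prod_eq_prod_map_map hy.aemeasurable hx.aemeasurable).mp hind.symm,
      hxd, hyd]
  set T : Set (ℝ × ℝ) := {p | p.2 < α ∧ p.1 < β ∧ p.1 + p.2 < γ} with hTdef
  have hT : MeasurableSet T := by
    refine MeasurableSet.inter ?_ (MeasurableSet.inter ?_ ?_)
    · exact measurableSet_lt measurable_snd measurable_const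
    · exact measurableSet_lt measurable_fst measurable_const
    · exact measurableSet_lt (measurable_fst.add measurable_snd) measurable_const
  have hpre : {ω | x ω < α ∧ y ω < β ∧ x ω + y ω < γ} = (fun ω => (y ω, x ω)) ⁻¹' T := by
    ext ω
    simp only [hTdef, Set.mem_setOf_eq, Set.mem_preimage]
    constructor
    · rintro ⟨h1, h2, h3⟩; exact ⟨h1, h2, by linarith⟩
    · rintro ⟨h1, h2, h3⟩; exact ⟨h1, h2, by linarith⟩
  set G : ℝ → ℝ := fun v => if v < β then lapCDF b (min α (γ - v)) else 0 with hGdef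
  have hGmeas : Measurable G := by
    refine Measurable.ite measurableSet_Iio ((lapCDF_measurable b).comp ?_) measurable_const
    exact measurable_const.min (measurable_const.sub measurable_id)
  have hGnonneg : ∀ v, 0 ≤ G v := by
    intro v
    simp only [hGdef]
    split_ifs
    · exact lapCDF_nonneg hb _
    · exact le_rfl
  have hGle : ∀ v, G v ≤ 1 := by
    intro v
    simp only [hGdef]
    split_ifs
    · exact lapCDF_le_one hb _
    · norm_num
  -- integrability of the real integrand
  have hhmeas : Measurable (fun v => lapPDF b v * G v) := (lapPDF_measurable b).mul hGmeas
  have hhint : Integrable (fun v => lapPDF b v * G v) := by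
    refine Integrable.mono' (lapPDF_integrable hb) hhmeas.aestronglyMeasurable
      (Filter.Eventually.of_forall fun v => ?_)
    rw [Real.norm_of_nonneg (mul_nonneg (lapPDF_nonneg hb v) (hGnonneg v))]
    calc lapPDF b v * G v ≤ lapPDF b v * 1 :=
          mul_le_mul_of_nonneg_left (hGle v) (lapPDF_nonneg hb v)
      _ = lapPDF b v := mul_one _
  have hhnonneg : ∀ v, 0 ≤ lapPDF b v * G v :=
    fun v => mul_nonneg (lapPDF_nonneg hb v) (hGnonneg v)
  -- the measure of the event
  have hmeas : μ {ω | x ω < α ∧ y ω < β ∧ x ω + y ω < γ}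
      = ENNReal.ofReal (∫ v, lapPDF b v * G v) := by
    rw [hpre, ← Measure.map_apply (hy.prodMk hx) hT, hmap, Measure.prod_apply hT]
    have hslice : ∀ v : ℝ, ν (Prod.mk v ⁻¹' T) = ENNReal.ofReal (G v) := by
      intro v
      by_cases hv : v < β
      · have hs : Prod.mk v ⁻¹' T = Set.Iio (min α (γ - v)) := by
          ext u
          simp only [hTdef, Set.mem_preimage, Set.mem_setOf_eq, Set.mem_Iio, lt_min_iff]
          constructor
          · rintro ⟨h1, _, h3⟩; exact ⟨h1, by linarith⟩
          · rintro ⟨h1, h3⟩; exact ⟨h1, hv, by linarith⟩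
        rw [hs, hνdef, lapMeasure_Iio hb, hGdef]
        simp only [if_pos hv]
      · have hs : Prod.mk v ⁻¹' T = ∅ := by
          ext u
          simp only [hTdef, Set.mem_preimage, Set.mem_setOf_eq, Set.mem_empty_iff_false,
            iff_false]
          rintro ⟨_, h2, _⟩
          exact hv h2
        rw [hs, measure_empty, hGdef]
        simp only [if_neg hv, ENNReal.ofReal_zero]
    rw [lintegral_congr hslice]
    have hwd : ∫⁻ v, ENNReal.ofReal (G v) ∂ν
        = ∫⁻ v, (fun x => ENNReal.ofReal (lapPDF b x)) v * ENNReal.ofReal (G v) := by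
      rw [hνdef, lapMeasure]
      exact lintegral_withDensity_eq_lintegral_mul volume
        (ENNReal.measurable_ofReal.comp (lapPDF_measurable b))
        (ENNReal.measurable_ofReal.comp hGmeas)
    rw [hwd]
    have : ∀ v, (fun x => ENNReal.ofReal (lapPDF b x)) v * ENNReal.ofReal (G v)
        = ENNReal.ofReal (lapPDF b v * G v) := by
      intro v
      rw [← ENNReal.ofReal_mul (lapPDF_nonneg hb v)]
    rw [lintegral_congr this,
      ← ofReal_integral_eq_lintegral_ofReal hhint (Filter.Eventually.of_forall hhnonneg)]
  rw [hmeas, ENNReal.toReal_ofReal (integral_nonneg hhnonneg)]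
  -- now real analysis
  have hrestr : ∫ v, lapPDF b v * G v
      = ∫ v in Set.Iio β, lapPDF b v * lapCDF b (min α (γ - v)) := by
    rw [← integral_indicator measurableSet_Iio]
    congr 1
    funext v
    simp only [Set.indicator_apply, Set.mem_Iio, hGdef]
    split_ifs with hv
    · rfl
    · simp
  have hγα : γ - α < β := by linarith
  have hsplit : Set.Iio β = Set.Iio (γ - α) ∪ Set.Ico (γ - α) β :=
    (Set.Iio_union_Ico_eq_Iio hγα.le).symm
  have hdisj : Disjoint (Set.Iio (γ - α)) (Set.Ico (γ - α) β) := by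
    rw [Set.disjoint_left]
    rintro v hv ⟨h1, _⟩
    exact absurd hv (not_lt.2 h1)
  have hintOn : ∀ s : Set ℝ, IntegrableOn (fun v => lapPDF b v * lapCDF b (min α (γ - v))) s := by
    intro s
    have : Integrable (fun v => lapPDF b v * lapCDF b (min α (γ - v))) := by
      refine Integrable.mono' (lapPDF_integrable hb)
        (((lapPDF_measurable b).mul ((lapCDF_measurable b).comp
          (measurable_const.min (measurable_const.sub measurable_id)))).aestronglyMeasurable)
        (Filter.Eventually.of_forall fun v => ?_)
      rw [Real.norm_of_nonneg (mul_nonneg (lapPDF_nonneg hb v) (lapCDF_nonneg hb _))]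
      calc lapPDF b v * lapCDF b (min α (γ - v)) ≤ lapPDF b v * 1 :=
            mul_le_mul_of_nonneg_left (lapCDF_le_one hb _) (lapPDF_nonneg hb v)
        _ = lapPDF b v := mul_one _
    exact this.integrableOn
  rw [hrestr, hsplit, setIntegral_union hdisj measurableSet_Ico (hintOn _) (hintOn _)]
  have hpart1 : ∫ v in Set.Iio (γ - α), lapPDF b v * lapCDF b (min α (γ - v))
      = lapCDF b α * lapCDF b (γ - α) := by
    have : ∫ v in Set.Iio (γ - α), lapPDF b v * lapCDF b (min α (γ - v))
        = ∫ v in Set.Iio (γ - α), lapPDF b v * lapCDF b α := by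
      refine setIntegral_congr_fun measurableSet_Iio (fun v hv => ?_)
      rw [min_eq_left (by simp only [Set.mem_Iio] at hv; linarith)]
    rw [this, integral_mul_const, ← integral_Iic_eq_integral_Iio, integral_lapPDF_Iic hb,
      mul_comm]
  have hpart2 : ∫ v in Set.Ico (γ - α) β, lapPDF b v * lapCDF b (min α (γ - v))
      = ∫ z in (γ - α)..β, lapCDF b (γ - z) * lapPDF b z := by
    have h1 : ∫ v in Set.Ico (γ - α) β, lapPDF b v * lapCDF b (min α (γ - v))
        = ∫ v in Set.Ico (γ - α) β, lapCDF b (γ - v) * lapPDF b v := by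
      refine setIntegral_congr_fun measurableSet_Ico (fun v hv => ?_)
      rw [min_eq_right (by linarith [hv.1]), mul_comm]
    rw [h1, integral_Ico_eq_integral_Ioo, ← integral_Ioc_eq_integral_Ioo,
      ← intervalIntegral.integral_of_le hγα.le]
  rw [hpart1, hpart2]
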